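/- Let q be a prime power with q > 2. If g is an automorphism of the graph NU(3,q^2) commuting with every automorphism of NU(3,q^2) induced by an F-linear bijection of F^3 that preserves H(2,q^2), then g is the identity; that is, the centralizer in Aut(NU(3,q^2)) of the subgroup of automorphisms induced by linear collineations stabilizing H(2,q^2) is trivial. -/

import Mathlib

open Projectivization
open scoped LinearAlgebra.Projectivization

variable (F : Type) [Field F] [Fintype F]

/-- The projective space PG(n, |F|) over `F`, as the projectivization of `Fin (n+1) → F`. -/
abbrev PG (n : ℕ) := ℙ F (Fin (n+1) → F)

/-- The Hermitian variety `H(n,q^2)`: points `[x_0 : ... : x_n]` with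
`x_0^{q+1} + ... + x_n^{q+1} = 0`. -/
def Herm (q n : ℕ) : Set (PG F n) :=
  {p | ∑ i, (p.rep i) ^ (q+1) = 0}

/-- The set of points of `PG(n,q^2)` lying on the line given by a `2`-dimensional subspace. -/
def lineSet (n : ℕ) (W : Submodule F (Fin (n+1) → F)) : Set (PG F n) :=
  {p | p.submodule ≤ W}

/-- `W` determines a line of `PG(n,q^2)`, i.e. it is a `2`-dimensional subspace. -/
def IsLine (n : ℕ) (W : Submodule F (Fin (n+1) → F)) : Prop :=
  Module.finrank F W = 2

/-- A line is tangent to `H(n,q^2)` if it meets it in exactly one point. -/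
def IsTangent (q n : ℕ) (W : Submodule F (Fin (n+1) → F)) : Prop :=
  IsLine F n W ∧ (lineSet F n W ∩ Herm F q n).ncard = 1

/-- The graph `NU(n+1,q^2)`: vertices are points off the Hermitian variety, two distinct
vertices adjacent iff the line joining them is tangent to `H(n,q^2)`. -/
def NU (q n : ℕ) : SimpleGraph {p : PG F n // p ∉ Herm F q n} where
  Adj u v := u ≠ v ∧ IsTangent F q n (Submodule.span F {u.1.rep, v.1.rep})
  symm := by
    refine ⟨?_⟩
    rintro u v ⟨h1, h2⟩
    exact ⟨h1.symm, by rwa [Set.pair_comm]⟩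
  loopless := ⟨fun u h => h.1 rfl⟩

/-- A strongly regular graph with parameters `(v, k, l, m)`. -/
def IsSRG {V : Type} (G : SimpleGraph V) (v k l m : ℤ) : Prop :=
  (Nat.card V : ℤ) = v ∧
  (∀ x, (Nat.card (G.neighborSet x) : ℤ) = k) ∧
  (∀ x y, G.Adj x y → (Nat.card (G.commonNeighbors x y) : ℤ) = l) ∧
  (∀ x y, x ≠ y → ¬ G.Adj x y → (Nat.card (G.commonNeighbors x y) : ℤ) = m)

/-- The collineation of `PG(n,q^2)` induced by an `F`-linear bijection of `F^{n+1}`. -/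
noncomputable def inducedMap (n : ℕ) (f : (Fin (n+1) → F) ≃ₗ[F] (Fin (n+1) → F)) :
    PG F n → PG F n :=
  Projectivization.map (f.toLinearMap) f.injective


set_option linter.unusedSectionVars false
set_option linter.unusedVariables false
set_option maxHeartbeats 1000000

/-! ### Auxiliary development: the Hermitian form, unitary reflections, and transport of the
graph structure along linear collineations. -/

section SformBasics

variable {F : Type} [Field F] [Fintype F]

/-- The Hermitian-type sesquilinear form `⟨x, y⟩ = ∑ xᵢ yᵢ^q`. -/
def sform (q : ℕ) (x y : Fin 3 → F) : F := ∑ i, x i * (y i) ^ q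

lemma sform_add_left (q : ℕ) (x x' y : Fin 3 → F) :
    sform q (x + x') y = sform q x y + sform q x' y := by
  simp [sform, add_mul, Finset.sum_add_distrib]

lemma sform_zero_left (q : ℕ) (y : Fin 3 → F) : sform q (0 : Fin 3 → F) y = 0 := by
  simp [sform]

lemma sform_smul_left (q : ℕ) (c : F) (x y : Fin 3 → F) :
    sform q (c • x) y = c * sform q x y := by
  simp only [sform, Pi.smul_apply, smul_eq_mul, Finset.mul_sum]
  exact Finset.sum_congr rfl fun i _ => by ring

lemma sform_smul_right (q : ℕ) (c : F) (x y : Fin 3 → F) :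
    sform q x (c • y) = c ^ q * sform q x y := by
  simp only [sform, Pi.smul_apply, smul_eq_mul, mul_pow, Finset.mul_sum]
  exact Finset.sum_congr rfl fun i _ => by ring

variable {q : ℕ}

/-- The `q`-power Frobenius as a ring hom, given the hypotheses. -/
def frobHom (hq0 : q ≠ 0) (hadd : ∀ a b : F, (a + b) ^ q = a ^ q + b ^ q) : F →+* F where
  toFun a := a ^ q
  map_one' := one_pow q
  map_mul' a b := mul_pow a b q
  map_zero' := zero_pow hq0
  map_add' := hadd

lemma sform_add_right (hadd : ∀ a b : F, (a + b) ^ q = a ^ q + b ^ q) (x y y' : Fin 3 → F) :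
    sform q x (y + y') = sform q x y + sform q x y' := by
  simp [sform, hadd, mul_add, Finset.sum_add_distrib]

lemma sform_conj (hq0 : q ≠ 0) (hadd : ∀ a b : F, (a + b) ^ q = a ^ q + b ^ q)
    (hQ : ∀ a : F, (a ^ q) ^ q = a) (x y : Fin 3 → F) :
    sform q y x = (sform q x y) ^ q := by
  have h := map_sum (frobHom hq0 hadd) (fun i => x i * (y i) ^ q) Finset.univ
  simp only [frobHom, RingHom.coe_mk, MonoidHom.coe_mk, OneHom.coe_mk] at h
  rw [sform, sform, h]
  exact Finset.sum_congr rfl fun i _ => by rw [mul_pow, hQ]; ring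

/-- `x ↦ sform q x y` as a linear map. -/
def sformL (q : ℕ) (y : Fin 3 → F) : (Fin 3 → F) →ₗ[F] F where
  toFun x := sform q x y
  map_add' x x' := sform_add_left q x x' y
  map_smul' c x := sform_smul_left q c x y

lemma sform_left_zero (hq0 : q ≠ 0) (z : Fin 3 → F) (h : ∀ x, sform q x z = 0) : z = 0 := by
  funext j
  have hj := h (Pi.single j 1)
  simp only [sform, Pi.single_apply] at hj
  rw [Finset.sum_eq_single j (fun i _ hi => by simp [if_neg hi]) (by simp)] at hj
  simp only [if_pos rfl, one_mul] at hj
  simpa [pow_eq_zero_iff hq0] using hj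

end SformBasics

section Refl
variable {F : Type} [Field F] [Fintype F] {q : ℕ}

/-- Unitary pseudo-reflection (as a linear map) about `w` with multiplier coefficient `μ`. -/
def reflMap (q : ℕ) (w : Fin 3 → F) (μ : F) : (Fin 3 → F) →ₗ[F] (Fin 3 → F) where
  toFun x := x + (μ * sform q x w) • w
  map_add' x y := by
    show (x + y) + (μ * sform q (x + y) w) • w = _
    rw [sform_add_left, mul_add, add_smul]; abel
  map_smul' c x := by
    show (c • x) + (μ * sform q (c • x) w) • w = _
    rw [sform_smul_left, RingHom.id_apply, smul_add, smul_smul]; ring_nf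

lemma reflMap_apply (q : ℕ) (w : Fin 3 → F) (μ : F) (x : Fin 3 → F) :
    reflMap q w μ x = x + (μ * sform q x w) • w := rfl

lemma reflMap_comp (w : Fin 3 → F) (he : sform q w w ≠ 0) (l l' : F) (x : Fin 3 → F) :
    reflMap q w ((l' - 1) / sform q w w) (reflMap q w ((l - 1) / sform q w w) x)
      = reflMap q w ((l * l' - 1) / sform q w w) x := by
  simp only [reflMap_apply, sform_add_left, sform_smul_left]
  rw [add_assoc, ← add_smul]
  congr 1
  field_simp
  ring

lemma reflMap_one (w : Fin 3 → F) (x : Fin 3 → F) :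
    reflMap q w ((1 - 1) / sform q w w) x = x := by
  simp [reflMap_apply]

/-- Unitary pseudo-reflection as a linear equivalence. -/
def reflEquiv (q : ℕ) (w : Fin 3 → F) (he : sform q w w ≠ 0) (l : F) (hl : l ≠ 0) :
    (Fin 3 → F) ≃ₗ[F] (Fin 3 → F) :=
  LinearEquiv.ofLinear (reflMap q w ((l - 1) / sform q w w))
    (reflMap q w ((l⁻¹ - 1) / sform q w w))
    (LinearMap.ext fun x => by
      simpa [LinearMap.comp_apply, reflMap_comp w he l⁻¹ l x,
        inv_mul_cancel₀ hl] using reflMap_one w x)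
    (LinearMap.ext fun x => by
      simpa [LinearMap.comp_apply, reflMap_comp w he l l⁻¹ x,
        mul_inv_cancel₀ hl] using reflMap_one w x)

lemma reflEquiv_apply (q : ℕ) (w : Fin 3 → F) (he : sform q w w ≠ 0) (l : F) (hl : l ≠ 0)
    (x : Fin 3 → F) :
    reflEquiv q w he l hl x = x + ((l - 1) / sform q w w * sform q x w) • w := rfl

lemma reflEquiv_sform (hq0 : q ≠ 0) (hadd : ∀ a b : F, (a + b) ^ q = a ^ q + b ^ q)
    (hQ : ∀ a : F, (a ^ q) ^ q = a)
    (w : Fin 3 → F) (he : sform q w w ≠ 0) (l : F) (hl0 : l ≠ 0) (hl : l ^ (q + 1) = 1)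
    (x y : Fin 3 → F) :
    sform q (reflEquiv q w he l hl0 x) (reflEquiv q w he l hl0 y) = sform q x y := by
  have hew : (sform q w w) ^ q = sform q w w := (sform_conj hq0 hadd hQ w w).symm
  have hwy : sform q w y = (sform q y w) ^ q := sform_conj hq0 hadd hQ y w
  have hsub : ∀ a b : F, (a - b) ^ q = a ^ q - b ^ q := by
    intro a b
    have h := hadd (a - b) b
    rw [sub_add_cancel] at h
    rw [h]; ring
  have hLl : l ^ q * l = 1 := by rw [pow_succ] at hl; exact hl
  have hbq : ((l - 1) / sform q w w * sform q y w) ^ q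
      = (l ^ q - 1) / sform q w w * (sform q y w) ^ q := by
    rw [mul_pow, div_pow, hsub, one_pow, hew]
  rw [reflEquiv_apply, reflEquiv_apply, sform_add_left,
    sform_add_right hadd, sform_add_right hadd, sform_smul_left, sform_smul_right,
    sform_smul_right, sform_smul_left, hwy, hbq]
  field_simp
  linear_combination (sform q x w * (sform q y w) ^ q) * hLl
end Refl

section Cyc
variable {F : Type} [Field F] [Fintype F] {q : ℕ}

lemma sq_sub_one (hq2 : 2 < q) : (q - 1) * (q + 1) = q ^ 2 - 1 := by
  obtain ⟨m, rfl⟩ : ∃ m, q = m + 3 := ⟨q - 3, by omega⟩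
  refine Nat.eq_sub_of_add_eq ?_
  show (m + 2) * (m + 3 + 1) + 1 = (m + 3) ^ 2
  ring

lemma exists_lambda (hq2 : 2 < q) (hF : Fintype.card F = q ^ 2) :
    ∃ l : F, l ^ (q + 1) = 1 ∧ l ≠ 1 ∧ l ≠ 0 := by
  haveI : Fintype Fˣ := Fintype.ofFinite _
  obtain ⟨g, hg⟩ := IsCyclic.exists_generator (α := Fˣ)
  have horder : orderOf g = q ^ 2 - 1 := by
    rw [orderOf_eq_card_of_forall_mem_zpowers hg, Nat.card_units, Nat.card_eq_fintype_card, hF]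
  refine ⟨((g ^ (q - 1) : Fˣ) : F), ?_, ?_, Units.ne_zero _⟩
  · rw [← Units.val_pow_eq_pow_val, ← pow_mul, sq_sub_one hq2, ← horder,
      pow_orderOf_eq_one, Units.val_one]
  · intro h1
    have h2 : (g ^ (q - 1) : Fˣ) = 1 := Units.ext (by simpa using h1)
    have hdvd : orderOf g ∣ q - 1 := orderOf_dvd_of_pow_eq_one h2
    rw [horder] at hdvd
    have hle : q ^ 2 - 1 ≤ q - 1 := Nat.le_of_dvd (by omega) hdvd
    have h3 : q ^ 2 = q * q := by ring
    rw [h3] at hle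
    have h4 : 3 * q ≤ q * q := Nat.mul_le_mul_right q (by omega)
    generalize hQ : q * q = Q at hle h4
    omega

lemma exists_eps (hq2 : 2 < q) (hF : Fintype.card F = q ^ 2) (a : F) :
    ∃ ε : F, ε ≠ 0 ∧ ε ^ (q + 1) ≠ a := by
  by_cases ha : a = 1
  · haveI : Fintype Fˣ := Fintype.ofFinite _
    obtain ⟨g, hg⟩ := IsCyclic.exists_generator (α := Fˣ)
    have horder : orderOf g = q ^ 2 - 1 := by
      rw [orderOf_eq_card_of_forall_mem_zpowers hg, Nat.card_units, Nat.card_eq_fintype_card, hF]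
    refine ⟨(g : F), Units.ne_zero _, ?_⟩
    intro hpow
    have h2 : (g ^ (q + 1) : Fˣ) = 1 := Units.ext (by simpa [ha] using hpow)
    have hdvd : orderOf g ∣ q + 1 := orderOf_dvd_of_pow_eq_one h2
    rw [horder] at hdvd
    have hle : q ^ 2 - 1 ≤ q + 1 := Nat.le_of_dvd (by omega) hdvd
    have h3 : q ^ 2 = q * q := by ring
    rw [h3] at hle
    have h4 : 3 * q ≤ q * q := Nat.mul_le_mul_right q (by omega)
    generalize hQ : q * q = Q at hle h4
    omega
  · exact ⟨1, one_ne_zero, by simpa using fun h => ha h.symm⟩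
end Cyc

section Moving
variable {F : Type} [Field F] [Fintype F] {q : ℕ}

lemma move_helper (v w : Fin 3 → F) (hv0 : v ≠ 0) (hw : ∀ c : F, c • v ≠ w) (d : F)
    (hd : d ≠ 0) : ∀ c : F, v + d • w ≠ c • v := by
  intro c hEq
  apply hw (d⁻¹ * (c - 1))
  have h1 : d • w = (c - 1) • v := by
    rw [sub_smul, one_smul]
    linear_combination (norm := module) hEq
  rw [mul_smul, ← h1, smul_smul, inv_mul_cancel₀ hd, one_smul]

lemma smul_ne_symm (u v : Fin 3 → F) (hu0 : u ≠ 0) (h : ∀ c : F, c • u ≠ v) :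
    ∀ c : F, c • v ≠ u := by
  intro c hEq
  rcases eq_or_ne c 0 with rfl | hc
  · rw [zero_smul] at hEq; exact hu0 hEq.symm
  · exact h c⁻¹ (by rw [← hEq, smul_smul, inv_mul_cancel₀ hc, one_smul])

/-- Key algebraic lemma: for non-isotropic, projectively distinct `u`, `v` there is a
form-preserving linear bijection fixing the line of `u` and moving the line of `v`. -/
lemma exists_moving (hq0 : q ≠ 0) (hq2 : 2 < q) (hF : Fintype.card F = q ^ 2)
    (hadd : ∀ a b : F, (a + b) ^ q = a ^ q + b ^ q)
    (hQ : ∀ a : F, (a ^ q) ^ q = a)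
    (u v : Fin 3 → F) (hu0 : u ≠ 0) (hv0 : v ≠ 0)
    (hu : sform q u u ≠ 0) (hv : sform q v v ≠ 0)
    (hne : ∀ c : F, c • u ≠ v) :
    ∃ f : (Fin 3 → F) ≃ₗ[F] (Fin 3 → F),
      (∀ x, sform q (f x) (f x) = sform q x x) ∧
      (∃ c : F, c ≠ 0 ∧ f u = c • u) ∧ (∀ c : F, f v ≠ c • v) := by
  obtain ⟨l, hl1, hlne, hl0⟩ := exists_lambda hq2 hF
  by_cases huv : sform q v u = 0
  · -- Case where v ⊥ u: reflect about a suitable w in u-perp.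
    have hzex : ∃ z : Fin 3 → F, z ≠ 0 ∧ sform q z u = 0 ∧ sform q z v = 0 := by
      by_contra hcon
      push_neg at hcon
      have hinj : Function.Injective ((sformL q u).prod (sformL q v)) := by
        rw [← LinearMap.ker_eq_bot, Submodule.eq_bot_iff]
        intro z hz
        have h1 : sform q z u = 0 := congrArg Prod.fst hz
        have h2 : sform q z v = 0 := congrArg Prod.snd hz
        by_contra hz0
        exact (hcon z hz0 h1) h2
      have hle := LinearMap.finrank_le_finrank_of_injective hinj
      rw [Module.finrank_fin_fun] at hle
      have : Module.finrank F (F × F) = 2 := by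
        simp [Module.finrank_prod]
      omega
    obtain ⟨z, hz0, hzu, hzv⟩ := hzex
    have huz : sform q u z = 0 := by rw [sform_conj hq0 hadd hQ, hzu, zero_pow hq0]
    have hvz : sform q v z = 0 := by rw [sform_conj hq0 hadd hQ, hzv, zero_pow hq0]
    have hzz : sform q z z ≠ 0 := by
      intro hziso
      apply hz0
      apply sform_left_zero hq0
      have huv' : sform q u v = 0 := by rw [sform_conj hq0 hadd hQ, huv, zero_pow hq0]
      have hind : LinearIndependent F ![u, v, z] := by
        rw [Fintype.linearIndependent_iff]
        intro c hc
        rw [Fin.sum_univ_three] at hc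
        simp only [Matrix.cons_val_zero, Matrix.cons_val_one, Matrix.head_cons,
          Matrix.cons_val_two, Matrix.tail_cons] at hc
        have hc0 : c 0 = 0 := by
          have h := congrArg (fun t => sform q t u) hc
          simp only [sform_add_left, sform_smul_left, sform_zero_left, huv, hzu,
            mul_zero, add_zero] at h
          exact (mul_eq_zero.mp h).resolve_right hu
        have hc1 : c 1 = 0 := by
          have h := congrArg (fun t => sform q t v) hc
          simp only [sform_add_left, sform_smul_left, sform_zero_left, huv', hzv,
            mul_zero, add_zero, zero_add] at h
          exact (mul_eq_zero.mp h).resolve_right hv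
        have hc2 : c 2 = 0 := by
          rw [hc0, hc1, zero_smul, zero_smul, zero_add, zero_add] at hc
          rcases smul_eq_zero.mp hc with h | h
          · exact h
          · exact absurd h hz0
        intro i
        fin_cases i <;> assumption
      have hsp : Submodule.span F (Set.range ![u, v, z]) = ⊤ :=
        hind.span_eq_top_of_card_eq_finrank (by simp [Module.finrank_fin_fun])
      intro x
      have hx : x ∈ Submodule.span F (Set.range ![u, v, z]) := hsp ▸ Submodule.mem_top
      obtain ⟨c, rfl⟩ := (Submodule.mem_span_range_iff_exists_fun F).mp hx
      rw [Fin.sum_univ_three]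
      simp only [Matrix.cons_val_zero, Matrix.cons_val_one, Matrix.head_cons,
        Matrix.cons_val_two, Matrix.tail_cons]
      rw [sform_add_left, sform_add_left, sform_smul_left, sform_smul_left, sform_smul_left,
        huz, hvz, hziso]
      ring
    obtain ⟨ε, hε0, hεa⟩ := exists_eps hq2 hF (-(sform q v v) / sform q z z)
    set w := v + ε • z with hw
    have hwu : sform q w u = 0 := by
      rw [hw, sform_add_left, sform_smul_left, huv, hzu, mul_zero, add_zero]
    have huw : sform q u w = 0 := by rw [sform_conj hq0 hadd hQ, hwu, zero_pow hq0]
    have hvw : sform q v w = sform q v v := by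
      rw [hw, sform_add_right hadd, sform_smul_right, hvz, mul_zero, add_zero]
    have hww : sform q w w ≠ 0 := by
      have hexp : sform q w w = sform q v v + ε ^ (q + 1) * sform q z z := by
        rw [hw, sform_add_left, sform_add_right hadd, sform_add_right hadd,
          sform_smul_left, sform_smul_right, sform_smul_left, sform_smul_right,
          hvz, hzv, pow_succ]
        ring
      rw [hexp]
      intro hzero
      apply hεa
      rw [eq_div_iff hzz]
      linear_combination hzero
    have hwv : ∀ c : F, c • v ≠ w := by
      intro c hEq
      apply hz0
      have h1 : (c - 1) • v = ε • z := by
        rw [sub_smul, one_smul]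
        rw [hw] at hEq
        linear_combination (norm := module) hEq
      have h2 : sform q ((c - 1) • v) v = 0 := by rw [h1, sform_smul_left, hzv, mul_zero]
      rw [sform_smul_left] at h2
      rcases mul_eq_zero.mp h2 with hc | hvv
      · rw [sub_eq_zero] at hc
        rw [hc, one_smul] at hEq
        have h3 : ε • z = 0 := by
          rw [hw] at hEq
          linear_combination (norm := module) hEq.symm
        rcases smul_eq_zero.mp h3 with h | h
        · exact absurd h hε0
        · exact h
      · exact absurd hvv hv
    refine ⟨reflEquiv q w hww l hl0, fun x => reflEquiv_sform hq0 hadd hQ w hww l hl0 hl1 x x,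
      ⟨1, one_ne_zero, ?_⟩, ?_⟩
    · rw [reflEquiv_apply, huw, mul_zero, zero_smul, add_zero, one_smul]
    · have hd : (l - 1) / sform q w w * sform q v w ≠ 0 := by
        rw [hvw]
        exact mul_ne_zero (div_ne_zero (sub_ne_zero.mpr hlne) hww) hv
      intro c hEq
      rw [reflEquiv_apply] at hEq
      exact move_helper v w hv0 hwv _ hd c hEq
  · -- Case where v is not perpendicular to u: reflect about u.
    refine ⟨reflEquiv q u hu l hl0, fun x => reflEquiv_sform hq0 hadd hQ u hu l hl0 hl1 x x,
      ⟨l, hl0, ?_⟩, ?_⟩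
    · rw [reflEquiv_apply]
      rw [div_mul_cancel₀ _ hu]
      rw [sub_smul, one_smul]
      abel
    · have hd : (l - 1) / sform q u u * sform q v u ≠ 0 :=
        mul_ne_zero (div_ne_zero (sub_ne_zero.mpr hlne) hu) huv
      intro c hEq
      rw [reflEquiv_apply] at hEq
      exact move_helper v u hv0 (smul_ne_symm u v hu0 hne) _ hd c hEq
end Moving

section Transport
variable {F : Type} [Field F] [Fintype F] {q : ℕ}

lemma herm_iff_sform (p : PG F 2) : p ∈ Herm F q 2 ↔ sform q p.rep p.rep = 0 := by
  simp only [Herm, Set.mem_setOf_eq, sform, pow_succ']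

lemma mk_mem_herm_iff (hq0 : q ≠ 0) (x : Fin 3 → F) (hx : x ≠ 0) :
    Projectivization.mk F x hx ∈ Herm F q 2 ↔ sform q x x = 0 := by
  rw [herm_iff_sform]
  obtain ⟨a, ha⟩ := exists_smul_eq_mk_rep F x hx
  rw [← ha, Units.smul_def, sform_smul_left, sform_smul_right]
  simp [mul_eq_zero, Units.ne_zero, pow_eq_zero_iff hq0]

lemma inducedMap_mk (f : (Fin 3 → F) ≃ₗ[F] (Fin 3 → F)) (x : Fin 3 → F) (hx : x ≠ 0) :
    inducedMap F 2 f (Projectivization.mk F x hx)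
      = Projectivization.mk F (f x) (by simp [LinearEquiv.map_eq_zero_iff, hx]) :=
  Projectivization.map_mk f.toLinearMap f.injective x hx

lemma inducedMap_symm_apply (f : (Fin 3 → F) ≃ₗ[F] (Fin 3 → F)) (p : PG F 2) :
    inducedMap F 2 f (inducedMap F 2 f.symm p) = p := by
  induction p using Projectivization.ind with
  | h x hx =>
    rw [inducedMap_mk, inducedMap_mk]
    simp_rw [LinearEquiv.apply_symm_apply]

lemma inducedMap_apply_symm (f : (Fin 3 → F) ≃ₗ[F] (Fin 3 → F)) (p : PG F 2) :
    inducedMap F 2 f.symm (inducedMap F 2 f p) = p := by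
  induction p using Projectivization.ind with
  | h x hx =>
    rw [inducedMap_mk, inducedMap_mk]
    simp_rw [LinearEquiv.symm_apply_apply]

lemma inducedMap_injective (f : (Fin 3 → F) ≃ₗ[F] (Fin 3 → F)) :
    Function.Injective (inducedMap F 2 f) :=
  Function.LeftInverse.injective (inducedMap_apply_symm f)

lemma herm_pres (hq0 : q ≠ 0) (f : (Fin 3 → F) ≃ₗ[F] (Fin 3 → F))
    (hpres : ∀ x, sform q (f x) (f x) = sform q x x) (p : PG F 2) :
    inducedMap F 2 f p ∈ Herm F q 2 ↔ p ∈ Herm F q 2 := by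
  induction p using Projectivization.ind with
  | h x hx =>
    rw [inducedMap_mk, mk_mem_herm_iff hq0, mk_mem_herm_iff hq0, hpres]

lemma herm_pres_symm (hq0 : q ≠ 0) (f : (Fin 3 → F) ≃ₗ[F] (Fin 3 → F))
    (hHerm : ∀ p : PG F 2, inducedMap F 2 f p ∈ Herm F q 2 ↔ p ∈ Herm F q 2) (p : PG F 2) :
    inducedMap F 2 f.symm p ∈ Herm F q 2 ↔ p ∈ Herm F q 2 := by
  conv_rhs => rw [← inducedMap_symm_apply f p]
  exact (hHerm _).symm

lemma herm_image (hq0 : q ≠ 0) (f : (Fin 3 → F) ≃ₗ[F] (Fin 3 → F))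
    (hHerm : ∀ p : PG F 2, inducedMap F 2 f p ∈ Herm F q 2 ↔ p ∈ Herm F q 2) :
    inducedMap F 2 f '' Herm F q 2 = Herm F q 2 := by
  ext p
  constructor
  · rintro ⟨r, hr, rfl⟩
    exact (hHerm r).mpr hr
  · intro hp
    exact ⟨inducedMap F 2 f.symm p, (herm_pres_symm hq0 f hHerm p).mpr hp,
      inducedMap_symm_apply f p⟩

lemma mem_lineSet (W : Submodule F (Fin 3 → F)) (p : PG F 2) :
    p ∈ lineSet F 2 W ↔ p.rep ∈ W := by
  rw [lineSet, Set.mem_setOf_eq, Projectivization.submodule_eq,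
    Submodule.span_singleton_le_iff_mem]

lemma rep_inducedMap (f : (Fin 3 → F) ≃ₗ[F] (Fin 3 → F)) (p : PG F 2) :
    ∃ a : Fˣ, (inducedMap F 2 f p).rep = (a : F) • f p.rep := by
  have h : inducedMap F 2 f p
      = Projectivization.mk F (f p.rep)
          (by simp [LinearEquiv.map_eq_zero_iff, p.rep_nonzero]) := by
    conv_lhs => rw [← p.mk_rep]
    exact inducedMap_mk f p.rep p.rep_nonzero
  obtain ⟨a, ha⟩ := exists_smul_eq_mk_rep F (f p.rep)
    (by simp [LinearEquiv.map_eq_zero_iff, p.rep_nonzero])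
  exact ⟨a, by rw [h, ← ha, Units.smul_def]⟩

lemma lineSet_inter_herm_map (f : (Fin 3 → F) ≃ₗ[F] (Fin 3 → F))
    (hHerm : ∀ p : PG F 2, inducedMap F 2 f p ∈ Herm F q 2 ↔ p ∈ Herm F q 2)
    (hq0 : q ≠ 0) (W : Submodule F (Fin 3 → F)) :
    lineSet F 2 (W.map f.toLinearMap) ∩ Herm F q 2
      = inducedMap F 2 f '' (lineSet F 2 W ∩ Herm F q 2) := by
  ext p
  constructor
  · rintro ⟨hline, hherm⟩
    refine ⟨inducedMap F 2 f.symm p, ⟨?_, (herm_pres_symm hq0 f hHerm p).mpr hherm⟩,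
      inducedMap_symm_apply f p⟩
    rw [mem_lineSet] at hline ⊢
    obtain ⟨a, ha⟩ := rep_inducedMap f.symm p
    rw [ha]
    apply Submodule.smul_mem
    obtain ⟨y, hy, hyy⟩ := Submodule.mem_map.mp hline
    have h2 : f.symm p.rep = y := by rw [← hyy]; exact f.symm_apply_apply y
    rwa [h2]
  · rintro ⟨r, ⟨hline, hherm⟩, rfl⟩
    refine ⟨?_, (hHerm r).mpr hherm⟩
    rw [mem_lineSet] at hline ⊢
    obtain ⟨a, ha⟩ := rep_inducedMap f r
    rw [ha]
    exact Submodule.smul_mem _ _ (Submodule.mem_map_of_mem hline)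

lemma isTangent_map_iff (f : (Fin 3 → F) ≃ₗ[F] (Fin 3 → F))
    (hHerm : ∀ p : PG F 2, inducedMap F 2 f p ∈ Herm F q 2 ↔ p ∈ Herm F q 2)
    (hq0 : q ≠ 0) (W : Submodule F (Fin 3 → F)) :
    IsTangent F q 2 (W.map f.toLinearMap) ↔ IsTangent F q 2 W := by
  unfold IsTangent IsLine
  rw [LinearEquiv.finrank_map_eq, lineSet_inter_herm_map f hHerm hq0 W,
    Set.ncard_image_of_injective _ (inducedMap_injective f)]

lemma span_pair_smul (a b : F) (ha : a ≠ 0) (hb : b ≠ 0) (x y : Fin 3 → F) :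
    Submodule.span F {a • x, b • y} = Submodule.span F {x, y} := by
  have h1 : ({a • x, b • y} : Set (Fin 3 → F)) = insert (a • x) {b • y} := rfl
  have h2 : ({x, y} : Set (Fin 3 → F)) = insert x {y} := rfl
  rw [h1, h2, Submodule.span_insert, Submodule.span_insert,
    Submodule.span_singleton_smul_eq (IsUnit.mk0 a ha) x,
    Submodule.span_singleton_smul_eq (IsUnit.mk0 b hb) y]

lemma span_rep_map (f : (Fin 3 → F) ≃ₗ[F] (Fin 3 → F)) (u v : PG F 2) :
    Submodule.span F {(inducedMap F 2 f u).rep, (inducedMap F 2 f v).rep}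
      = (Submodule.span F {u.rep, v.rep}).map f.toLinearMap := by
  obtain ⟨a, ha⟩ := rep_inducedMap f u
  obtain ⟨b, hb⟩ := rep_inducedMap f v
  rw [ha, hb, span_pair_smul _ _ (Units.ne_zero a) (Units.ne_zero b),
    Submodule.map_span, Set.image_pair]
  rfl

/-- The graph automorphism of `NU(3, q^2)` induced by a Hermitian-variety-preserving
linear bijection. -/
noncomputable def nuIso (hq0 : q ≠ 0) (f : (Fin 3 → F) ≃ₗ[F] (Fin 3 → F))
    (hHerm : ∀ p : PG F 2, inducedMap F 2 f p ∈ Herm F q 2 ↔ p ∈ Herm F q 2) :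
    NU F q 2 ≃g NU F q 2 where
  toFun u := ⟨inducedMap F 2 f u.1, fun hmem => u.2 ((hHerm u.1).mp hmem)⟩
  invFun u := ⟨inducedMap F 2 f.symm u.1,
    fun hmem => u.2 ((herm_pres_symm hq0 f hHerm u.1).mp hmem)⟩
  left_inv u := Subtype.ext (inducedMap_apply_symm f u.1)
  right_inv u := Subtype.ext (inducedMap_symm_apply f u.1)
  map_rel_iff' := by
    intro u v
    show (NU F q 2).Adj _ _ ↔ (NU F q 2).Adj u v
    constructor
    · rintro ⟨hne, htan⟩
      refine ⟨fun h => hne (by rw [h]), ?_⟩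
      have htan' : IsTangent F q 2 (Submodule.span F
          {(inducedMap F 2 f u.1).rep, (inducedMap F 2 f v.1).rep}) := htan
      rw [span_rep_map f u.1 v.1] at htan'
      exact (isTangent_map_iff f hHerm hq0 _).mp htan'
    · rintro ⟨hne, htan⟩
      refine ⟨fun h => hne (Subtype.ext (inducedMap_injective f
        (congrArg Subtype.val h))), ?_⟩
      show IsTangent F q 2 (Submodule.span F
        {(inducedMap F 2 f u.1).rep, (inducedMap F 2 f v.1).rep})
      rw [span_rep_map f u.1 v.1]
      exact (isTangent_map_iff f hHerm hq0 _).mpr htan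

lemma nuIso_apply (hq0 : q ≠ 0) (f : (Fin 3 → F) ≃ₗ[F] (Fin 3 → F))
    (hHerm : ∀ p : PG F 2, inducedMap F 2 f p ∈ Herm F q 2 ↔ p ∈ Herm F q 2)
    (u : {p : PG F 2 // p ∉ Herm F q 2}) :
    ((nuIso hq0 f hHerm u : {p : PG F 2 // p ∉ Herm F q 2}) : PG F 2)
      = inducedMap F 2 f u.1 := rfl
end Transport

section CharFacts
variable {F : Type} [Field F] [Fintype F] {q : ℕ}

lemma frob_add_of_card (hq : IsPrimePow q) (hF : Fintype.card F = q ^ 2) :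
    ∀ a b : F, (a + b) ^ q = a ^ q + b ^ q := by
  obtain ⟨p, k, hp, hk, hpk⟩ := hq
  haveI hchar := ringChar.charP F
  haveI hfact : Fact (Nat.Prime (ringChar F)) := ⟨CharP.char_is_prime F (ringChar F)⟩
  obtain ⟨n, hprime, hcardn⟩ := FiniteField.card F (ringChar F)
  have hpq : ringChar F = p := by
    have h1 : Fintype.card F = p ^ (2 * k) := by
      rw [hF, ← hpk, ← pow_mul, mul_comm]
    rw [hcardn] at h1
    have h2 : ringChar F ∣ p ^ (2 * k) := by
      rw [← h1]
      exact dvd_pow_self _ (by positivity)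
    have h3 : ringChar F ∣ p := hfact.out.dvd_of_dvd_pow h2
    exact (Nat.prime_dvd_prime_iff_eq hfact.out hp.nat_prime).mp h3
  intro a b
  rw [← hpk, ← hpq]
  exact add_pow_char_pow a b (ringChar F) k

lemma pow_q_pow_q (hF : Fintype.card F = q ^ 2) (a : F) : (a ^ q) ^ q = a := by
  rw [← pow_mul, ← pow_two, ← hF]
  exact FiniteField.pow_card a
end CharFacts

/-- For `q > 2`, the centralizer in `Aut(NU(3,q^2))` of the subgroup of
automorphisms induced by linear collineations stabilizing `H(2,q^2)` is trivial. -/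
theorem centralizer_of_linear_auts_trivial (q : ℕ) (hq : IsPrimePow q) (hq2 : 2 < q)
    (hF : Fintype.card F = q ^ 2)
    (g : NU F q 2 ≃g NU F q 2)
    (hcomm : ∀ h : NU F q 2 ≃g NU F q 2,
      (∃ f : (Fin 3 → F) ≃ₗ[F] (Fin 3 → F),
        inducedMap F 2 f '' Herm F q 2 = Herm F q 2 ∧
        ∀ u : {p : PG F 2 // p ∉ Herm F q 2}, (h u : PG F 2) = inducedMap F 2 f ↑u) →
      ∀ u, g (h u) = h (g u)) :
    ∀ u, g u = u := by
  intro u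
  by_contra hgu
  have hq0 : q ≠ 0 := by omega
  have hadd := frob_add_of_card hq hF
  have hQ := pow_q_pow_q hF
  have hab : ∀ c : F, c • u.1.rep ≠ (g u).1.rep := by
    intro c hc
    apply hgu
    apply Subtype.ext
    have hmk : Projectivization.mk F ((g u).1.rep) ((g u).1.rep_nonzero)
        = Projectivization.mk F (u.1.rep) (u.1.rep_nonzero) :=
      (Projectivization.mk_eq_mk_iff' F _ _ _ _).mpr ⟨c, hc⟩
    rw [Projectivization.mk_rep, Projectivization.mk_rep] at hmk
    exact hmk
  have hu : sform q u.1.rep u.1.rep ≠ 0 := fun h => u.2 ((herm_iff_sform u.1).mpr h)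
  have hv : sform q (g u).1.rep (g u).1.rep ≠ 0 :=
    fun h => (g u).2 ((herm_iff_sform (g u).1).mpr h)
  obtain ⟨f, hpres, ⟨c, hc0, hfu⟩, hfv⟩ :=
    exists_moving hq0 hq2 hF hadd hQ u.1.rep (g u).1.rep u.1.rep_nonzero
      (g u).1.rep_nonzero hu hv hab
  have hHerm := herm_pres hq0 f hpres
  have hcom := hcomm (nuIso hq0 f hHerm)
    ⟨f, herm_image hq0 f hHerm, fun w => rfl⟩ u
  have hup : inducedMap F 2 f u.1 = u.1 := by
    conv_lhs => rw [← u.1.mk_rep]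
    rw [inducedMap_mk]
    conv_rhs => rw [← u.1.mk_rep]
    exact (Projectivization.mk_eq_mk_iff' F _ _ _ _).mpr ⟨c, hfu.symm⟩
  have hu_fix : nuIso hq0 f hHerm u = u := Subtype.ext hup
  rw [hu_fix] at hcom
  have hmoved : inducedMap F 2 f (g u).1 = (g u).1 :=
    (congrArg Subtype.val hcom).symm
  have hmk2 : inducedMap F 2 f
      (Projectivization.mk F (g u).1.rep (g u).1.rep_nonzero) = (g u).1 := by
    rw [Projectivization.mk_rep]; exact hmoved
  rw [inducedMap_mk] at hmk2
  have hmk3 := hmk2.trans ((Projectivization.mk_rep (g u).1).symm)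
  obtain ⟨e, he⟩ := (Projectivization.mk_eq_mk_iff' F _ _ _ _).mp hmk3
  exact hfv e he.symm
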